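/- Let S be a commutative ring with derivation d, φ : S → ℂ a linear functional vanishing on the image of d, and ω ∈ M_n(S). Then γ(L,L') := φ(tr(L·(dL' + [ω,L']))) defines a 2-cocycle on the Lie algebra M_n(S): it is antisymmetric and satisfies the cyclic cocycle identity. -/

import Mathlib

/-- `γ(L,L') = φ(tr(L·(dL' + [ω,L'])))` is a 2-cocycle on the Lie algebra
`M_n(S)`: antisymmetric and satisfying the cyclic cocycle identity. -/
theorem stmt_8 {n : ℕ} {S : Type*} [CommRing S]
    (d : S → S)
    (hadd : ∀ a b : S, d (a + b) = d a + d b)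
    (hmul : ∀ a b : S, d (a * b) = d a * b + a * d b)
    (φ : S →+ ℂ) (hφ : ∀ s : S, φ (d s) = 0)
    (ω : Matrix (Fin n) (Fin n) S)
    (γ : Matrix (Fin n) (Fin n) S → Matrix (Fin n) (Fin n) S → ℂ)
    (hγ : ∀ L L', γ L L' = φ ((L * (L'.map d + ⁅ω, L'⁆)).trace)) :
    (∀ L L', γ L L' = -γ L' L) ∧
    (∀ L L' L'', γ ⁅L, L'⁆ L'' + γ ⁅L', L''⁆ L + γ ⁅L'', L⁆ L' = 0) := by
  let d' : S →+ S := AddMonoidHom.mk' d hadd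
  have dsum : ∀ (f : Fin n → S), d (∑ k, f k) = ∑ k, d (f k) := fun f => map_sum d' f _
  have key_trace : ∀ A : Matrix (Fin n) (Fin n) S, (A.map d).trace = d A.trace := by
    intro A
    simp only [Matrix.trace, Matrix.diag, Matrix.map_apply, dsum]
  have key_mul : ∀ A B : Matrix (Fin n) (Fin n) S,
      (A * B).map d = A.map d * B + A * B.map d := by
    intro A B
    ext i j
    simp only [Matrix.map_apply, Matrix.mul_apply, Matrix.add_apply, dsum, hmul,
      Finset.sum_add_distrib]
  have hlie : ∀ A B : Matrix (Fin n) (Fin n) S,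
      (A * ⁅ω, B⁆).trace = (ω * ⁅B, A⁆).trace := by
    intro A B
    simp only [Ring.lie_def, mul_sub, Matrix.trace_sub, ← mul_assoc]
    linear_combination - Matrix.trace_mul_cycle ω B A - Matrix.trace_mul_cycle A B ω
  have hD : ∀ A B C : Matrix (Fin n) (Fin n) S, d ((A * B * C).trace) =
      (B * C * A.map d).trace + (C * A * B.map d).trace + (A * B * C.map d).trace := by
    intro A B C
    rw [← key_trace, key_mul, key_mul, Matrix.trace_add, add_mul, Matrix.trace_add]
    have h2 : (A.map d * B * C).trace = (B * C * A.map d).trace :=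
      (Matrix.trace_mul_cycle B C (A.map d)).symm
    have h3 : (A * B.map d * C).trace = (C * A * B.map d).trace := by
      rw [Matrix.trace_mul_cycle A (B.map d) C]
    rw [h2, h3]
  constructor
  · intro L L'
    rw [hγ, hγ, eq_neg_iff_add_eq_zero, ← map_add]
    have e : (L * (L'.map d + ⁅ω, L'⁆)).trace + (L' * (L.map d + ⁅ω, L⁆)).trace
        = d ((L * L').trace) := by
      rw [mul_add, mul_add, Matrix.trace_add, Matrix.trace_add,
          hlie L L', hlie L' L, ← key_trace, key_mul, Matrix.trace_add,
          Matrix.trace_mul_comm L' (L.map d)]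
      have hsk : ⁅L', L⁆ = -⁅L, L'⁆ := by rw [Ring.lie_def, Ring.lie_def, neg_sub]
      rw [hsk, mul_neg, Matrix.trace_neg]
      ring
    rw [e, hφ]
  · intro L L' L''
    rw [hγ, hγ, hγ, ← map_add, ← map_add]
    have e : (⁅L, L'⁆ * (L''.map d + ⁅ω, L''⁆)).trace
        + (⁅L', L''⁆ * (L.map d + ⁅ω, L⁆)).trace
        + (⁅L'', L⁆ * (L'.map d + ⁅ω, L'⁆)).trace
        = d ((L * L' * L'').trace) - d ((L' * L * L'').trace) := by
      rw [mul_add, mul_add, mul_add, Matrix.trace_add, Matrix.trace_add, Matrix.trace_add,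
          hlie _ L'', hlie _ L, hlie _ L']
      have hj : (ω * ⁅L'', ⁅L, L'⁆⁆).trace + (ω * ⁅L, ⁅L', L''⁆⁆).trace
          + (ω * ⁅L', ⁅L'', L⁆⁆).trace = 0 := by
        rw [← Matrix.trace_add, ← Matrix.trace_add, ← mul_add, ← mul_add,
            @lie_jacobi _ LieRing.ofAssociativeRing L'' L L']
        simp
      have hd1 := hD L L' L''
      have hd2 := hD L' L L''
      have e1 : (⁅L, L'⁆ * L''.map d).trace
          = (L * L' * L''.map d).trace - (L' * L * L''.map d).trace := by
        rw [Ring.lie_def, sub_mul, Matrix.trace_sub]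
      have e2 : (⁅L', L''⁆ * L.map d).trace
          = (L' * L'' * L.map d).trace - (L'' * L' * L.map d).trace := by
        rw [Ring.lie_def, sub_mul, Matrix.trace_sub]
      have e3 : (⁅L'', L⁆ * L'.map d).trace
          = (L'' * L * L'.map d).trace - (L * L'' * L'.map d).trace := by
        rw [Ring.lie_def, sub_mul, Matrix.trace_sub]
      linear_combination e1 + e2 + e3 + hj - hd1 + hd2
    rw [e]
    rw [map_sub, hφ, hφ, sub_zero]
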